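/- Let F be a closed subset of a real Banach space with norm ‖·‖, and suppose G : F → F satisfies ‖G(φ) − G(ψ)‖ ≤ (1 − C‖φ − ψ‖^α) ‖φ − ψ‖ for all φ, ψ ∈ F, for some constants C, α > 0. Then there exists a unique φ⁺ ∈ F with G(φ⁺) = φ⁺, and moreover for every φ₀ ∈ F the sequence of iterates G^n(φ₀) converges to φ⁺. -/

import Mathlib

open Filter Topology

/-- **Banach–Caccioppoli-type theorem of Gomes–Valdinoci.**
Let `F` be a (nonempty) closed subset of a Banach space and `G : F → F` satisfy
`‖G(φ) − G(ψ)‖ ≤ (1 − C‖φ − ψ‖^α)‖φ − ψ‖` for all `φ, ψ ∈ F` and some constants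
`C, α > 0`.  Then `G` has a unique fixed point `φ⁺ ∈ F`, and for every `φ₀ ∈ F` the
iterates `G^n(φ₀)` converge to `φ⁺`. -/
theorem gomes_valdinoci_fixed_point
    {E : Type*} [NormedAddCommGroup E] [NormedSpace ℝ E] [CompleteSpace E]
    (F : Set E) (hF : IsClosed F) (hFne : F.Nonempty)
    (G : E → E) (hmaps : ∀ φ ∈ F, G φ ∈ F)
    (C α : ℝ) (hC : 0 < C) (hα : 0 < α)
    (hcontr : ∀ φ ∈ F, ∀ ψ ∈ F,
      ‖G φ - G ψ‖ ≤ (1 - C * ‖φ - ψ‖ ^ α) * ‖φ - ψ‖) :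
    ∃ φp ∈ F, G φp = φp ∧ (∀ ψ ∈ F, G ψ = ψ → ψ = φp) ∧
      ∀ φ₀ ∈ F, Tendsto (fun n => G^[n] φ₀) atTop (𝓝 φp) := by
  -- elementary inequality `1 + αx ≤ (1-x)^(-α)`
  have aux : ∀ x : ℝ, x < 1 → 1 + α * x ≤ (1 - x) ^ (-α) := by
    intro x hx1
    have h1 : α * x + 1 ≤ Real.exp (α * x) := Real.add_one_le_exp _
    have hpos : (0:ℝ) < 1 - x := by linarith
    have h2 : Real.log (1 - x) ≤ -x := by
      have := Real.log_le_sub_one_of_pos hpos; linarith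
    rw [Real.rpow_def_of_pos hpos]
    have h3 : α * x ≤ Real.log (1 - x) * (-α) := by nlinarith
    calc 1 + α * x ≤ Real.exp (α * x) := by linarith
      _ ≤ Real.exp (Real.log (1 - x) * (-α)) := Real.exp_le_exp.mpr h3
  have hiter : ∀ φ ∈ F, ∀ n : ℕ, G^[n] φ ∈ F := by
    intro φ hφ n
    induction n with
    | zero => simpa using hφ
    | succ n ih => rw [Function.iterate_succ_apply']; exact hmaps _ ih
  -- real arithmetic step
  have arith : ∀ s t n : ℝ, 0 ≤ n → 0 ≤ s → 0 < t →
      s * (1 + α * (C * t)) ≤ t → t ≤ (C * (1 + α * n))⁻¹ →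
      s ≤ (C * (1 + α * (n + 1)))⁻¹ := by
    intro s t n hn hs ht h3 hih
    have h1 : (0:ℝ) < C * (1 + α * n) := by positivity
    have h2 : (0:ℝ) < C * (1 + α * (n+1)) := by positivity
    have hih' : t * (C * (1 + α * n)) ≤ 1 := by
      calc t * (C * (1 + α * n)) ≤ (C * (1 + α * n))⁻¹ * (C * (1 + α * n)) :=
            mul_le_mul_of_nonneg_right hih h1.le
        _ = 1 := inv_mul_cancel₀ h1.ne'
    have hkey : s * (C * (1 + α * (n + 1))) ≤ 1 := by
      have hx : (0:ℝ) < 1 + α * (C * t) := by positivity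
      rw [← mul_le_mul_iff_of_pos_right hx]
      nlinarith [mul_le_mul_of_nonneg_right h3 h2.le]
    calc s = s * (C * (1 + α * (n + 1))) * (C * (1 + α * (n + 1)))⁻¹ := by
          field_simp
      _ ≤ 1 * (C * (1 + α * (n + 1)))⁻¹ := mul_le_mul_of_nonneg_right hkey (by positivity)
      _ = _ := one_mul _
  -- key decay estimate
  have key : ∀ φ ∈ F, ∀ ψ ∈ F, ∀ n : ℕ,
      ‖G^[n] φ - G^[n] ψ‖ ^ α ≤ (C * (1 + α * n))⁻¹ := by
    intro φ hφ ψ hψ n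
    induction n with
    | zero =>
      simp only [Function.iterate_zero_apply, Nat.cast_zero, mul_zero, add_zero, mul_one]
      rcases eq_or_lt_of_le (norm_nonneg (φ - ψ)) with h0 | h0
      · rw [← h0, Real.zero_rpow hα.ne']; positivity
      · have hc := hcontr φ hφ ψ hψ
        have hn : (0:ℝ) ≤ ‖G φ - G ψ‖ := norm_nonneg _
        have h2 : 0 ≤ (1 - C * ‖φ - ψ‖ ^ α) * ‖φ - ψ‖ := le_trans hn hc
        have h1 : C * ‖φ - ψ‖ ^ α ≤ 1 := by nlinarith
        rw [show (C:ℝ)⁻¹ = 1/C from (one_div C).symm, le_div_iff₀ hC]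
        linarith
    | succ n ih =>
      set d := ‖G^[n] φ - G^[n] ψ‖ with hd
      set d' := ‖G^[n+1] φ - G^[n+1] ψ‖ with hd'
      have hdnn : 0 ≤ d := norm_nonneg _
      have hc : d' ≤ (1 - C * d ^ α) * d := by
        rw [hd', Function.iterate_succ_apply', Function.iterate_succ_apply']
        exact hcontr _ (hiter φ hφ n) _ (hiter ψ hψ n)
      push_cast
      rcases eq_or_lt_of_le (norm_nonneg (G^[n+1] φ - G^[n+1] ψ)) with h0 | h0
      · rw [← hd'] at h0
        rw [← h0, Real.zero_rpow hα.ne']; positivity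
      · rw [← hd'] at h0
        have hdpos : 0 < d := by
          rcases eq_or_lt_of_le hdnn with h | h
          · exfalso
            rw [← h, Real.zero_rpow hα.ne'] at hc
            simp at hc; linarith
          · exact h
        set x := C * d ^ α with hx
        have hxpos : 0 < x := by positivity
        have hx1 : x < 1 := by
          by_contra h
          push_neg at h
          have : (1 - x) * d ≤ 0 := by nlinarith
          linarith
        have h1x : (0:ℝ) < 1 - x := by linarith
        have e1 : d' ^ α ≤ (1 - x) ^ α * d ^ α := by
          rw [← Real.mul_rpow h1x.le hdnn]
          exact Real.rpow_le_rpow (norm_nonneg _) hc hα.le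
        have e2 : (1 - x) ^ α ≤ (1 + α * x)⁻¹ := by
          have ha := aux x hx1
          rw [Real.rpow_neg h1x.le] at ha
          exact (le_inv_comm₀ (Real.rpow_pos_of_pos h1x α) (by positivity)).mpr ha
        have hdα : 0 < d ^ α := Real.rpow_pos_of_pos hdpos α
        have huα : 0 < 1 + α * x := by positivity
        have e3 : d' ^ α * (1 + α * x) ≤ d ^ α := by
          calc d' ^ α * (1 + α * x) ≤ ((1 + α * x)⁻¹ * d ^ α) * (1 + α * x) := by
                apply mul_le_mul_of_nonneg_right _ huα.le
                exact le_trans e1 (mul_le_mul_of_nonneg_right e2 hdα.le)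
            _ = d ^ α := by field_simp
        exact arith _ _ _ (Nat.cast_nonneg n) (Real.rpow_nonneg (norm_nonneg _) α) hdα e3 ih
  -- bound on the distance itself, and its convergence to 0
  set b : ℕ → ℝ := fun n => ((C * (1 + α * n))⁻¹) ^ α⁻¹ with hb
  have keyd : ∀ φ ∈ F, ∀ ψ ∈ F, ∀ n : ℕ, ‖G^[n] φ - G^[n] ψ‖ ≤ b n := by
    intro φ hφ ψ hψ n
    have h := key φ hφ ψ hψ n
    have := Real.rpow_le_rpow (Real.rpow_nonneg (norm_nonneg _) α) h (by positivity : (0:ℝ) ≤ α⁻¹)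
    rwa [Real.rpow_rpow_inv (norm_nonneg _) hα.ne'] at this
  have hb0 : Tendsto b atTop (𝓝 0) := by
    have h1 : Tendsto (fun n : ℕ => C * (1 + α * n)) atTop atTop := by
      apply Tendsto.const_mul_atTop hC
      apply tendsto_atTop_add_const_left
      exact (tendsto_natCast_atTop_atTop (R := ℝ)).const_mul_atTop hα
    have h2 : Tendsto (fun n : ℕ => (C * (1 + α * n))⁻¹) atTop (𝓝 0) :=
      h1.inv_tendsto_atTop
    have h3 : ContinuousAt (fun y : ℝ => y ^ α⁻¹) 0 :=
      Real.continuousAt_rpow_const 0 α⁻¹ (Or.inr (by positivity))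
    have h4 : ((0:ℝ)) ^ α⁻¹ = 0 := Real.zero_rpow (inv_ne_zero hα.ne')
    have h5 := h3.tendsto.comp h2
    rw [h4] at h5
    exact h5
  -- the iterates from the base point form a Cauchy sequence
  obtain ⟨φ₀', hφ₀'⟩ := hFne
  have hcauchy : CauchySeq (fun n => G^[n] φ₀') := by
    apply cauchySeq_of_le_tendsto_0 b _ hb0
    intro n m N hn hm
    rw [dist_eq_norm]
    obtain ⟨k, rfl⟩ := Nat.exists_eq_add_of_le hn
    obtain ⟨l, rfl⟩ := Nat.exists_eq_add_of_le hm
    rw [Function.iterate_add_apply, Function.iterate_add_apply]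
    · exact keyd _ (hiter _ hφ₀' k) _ (hiter _ hφ₀' l) N
  obtain ⟨φp, hφp⟩ := cauchySeq_tendsto_of_complete hcauchy
  have hφpF : φp ∈ F := hF.mem_of_tendsto hφp (Eventually.of_forall fun n => hiter _ hφ₀' n)
  -- G is 1-Lipschitz on F
  have hlip : ∀ φ ∈ F, ∀ ψ ∈ F, ‖G φ - G ψ‖ ≤ ‖φ - ψ‖ := by
    intro φ hφ ψ hψ
    have h := hcontr φ hφ ψ hψ
    have h1 : 0 ≤ C * ‖φ - ψ‖ ^ α := by positivity
    nlinarith [norm_nonneg (φ - ψ)]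
  -- fixed point
  have hfix : G φp = φp := by
    have h1 : Tendsto (fun n => G (G^[n] φ₀')) atTop (𝓝 (G φp)) := by
      rw [tendsto_iff_norm_sub_tendsto_zero]
      apply squeeze_zero (fun n => norm_nonneg _) (fun n => hlip _ (hiter _ hφ₀' n) _ hφpF)
      rw [← tendsto_iff_norm_sub_tendsto_zero]
      exact hφp
    have h2 : Tendsto (fun n => G (G^[n] φ₀')) atTop (𝓝 φp) := by
      have := hφp.comp (tendsto_add_atTop_nat 1)
      simpa [Function.comp_def, Function.iterate_succ_apply'] using this
    exact tendsto_nhds_unique h1 h2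
  refine ⟨φp, hφpF, hfix, ?_, ?_⟩
  · -- uniqueness
    intro ψ hψ hGψ
    by_contra hne
    have hd : 0 < ‖ψ - φp‖ := by
      rw [norm_pos_iff, sub_ne_zero]; exact hne
    have h := hcontr ψ hψ φp hφpF
    rw [hGψ, hfix] at h
    have h1 : 0 < C * ‖ψ - φp‖ ^ α := by positivity
    nlinarith
  · -- convergence for every starting point
    intro φ₀ hφ₀
    rw [tendsto_iff_norm_sub_tendsto_zero]
    apply squeeze_zero (fun n => norm_nonneg _) _ hb0
    intro n
    have := keyd φ₀ hφ₀ φp hφpF n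
    have hfixn : G^[n] φp = φp := Function.iterate_fixed hfix n
    rwa [hfixn] at this
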